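/- Assume M > 0 is a real number. Let x_1, …, x_d be a finite sequence of natural numbers and let d' ≤ d. Then est(x_1, …, x_{d'}; M) ≤ est(x_1, …, x_d; M). -/

import Mathlib

/-- `Scount X i` is the number of entries of `X` that are at least `i`. -/
def Scount (X : List ℕ) (i : ℤ) : ℕ :=
  X.countP fun x => decide (i ≤ (x : ℤ))

/-- `Tcount X i` is the number of entries of `X`, excluding the first one,
that are at least `i`. -/
def Tcount (X : List ℕ) (i : ℤ) : ℕ :=
  (X.drop 1).countP fun x => decide (i ≤ (x : ℤ))

/-- The smallest nonnegative integer `k` such that `S_k ≤ M`. -/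
noncomputable def estK (X : List ℕ) (M : ℝ) : ℕ :=
  sInf {k : ℕ | (Scount X (k : ℤ) : ℝ) ≤ M}

/-- `est X M = max (T_k · 2^k) (M · 2^(k-1))` if `k > 0`, and `T_0` if `k = 0`,
where `k` is the smallest nonnegative integer with `S_k ≤ M`. -/
noncomputable def est (X : List ℕ) (M : ℝ) : ℝ :=
  if 0 < estK X M then
    max ((Tcount X (estK X M : ℤ) : ℝ) * 2 ^ estK X M) (M * 2 ^ (estK X M - 1))
  else (Tcount X 0 : ℝ)

lemma scount_eq (X : List ℕ) (i : ℤ) :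
    Scount X i = List.countP (fun n : ℕ => decide (i ≤ (n : ℤ))) X := by
  unfold Scount
  simp only [List.bind_eq_flatMap, List.pure_def, List.flatMap_singleton']
  induction X with
  | nil => simp
  | cons a l ih => simp [List.countP_cons, ih]

lemma tcount_eq (X : List ℕ) (i : ℤ) :
    Tcount X i = List.countP (fun n : ℕ => decide (i ≤ (n : ℤ))) (X.drop 1) :=
  scount_eq (X.drop 1) i

lemma scount_take_le (X : List ℕ) (d' : ℕ) (i : ℤ) :
    Scount (X.take d') i ≤ Scount X i := by
  rw [scount_eq, scount_eq]
  exact (List.take_sublist _ _).countP_le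

lemma tcount_take_le (X : List ℕ) (d' : ℕ) (i : ℤ) :
    Tcount (X.take d') i ≤ Tcount X i := by
  rw [tcount_eq, tcount_eq]
  have h : ((X.take d').drop 1).Sublist (X.drop 1) := by
    rw [List.drop_take]
    exact List.take_sublist _ _
  exact h.countP_le

lemma tcount_le_scount (X : List ℕ) (i : ℤ) : Tcount X i ≤ Scount X i := by
  rw [tcount_eq, scount_eq]
  exact (List.drop_sublist _ _).countP_le

lemma est_set_nonempty (X : List ℕ) (M : ℝ) (hM : 0 < M) :
    {k : ℕ | (Scount X (k : ℤ) : ℝ) ≤ M}.Nonempty := by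
  refine ⟨X.sum + 1, ?_⟩
  have h0 : Scount X ((X.sum + 1 : ℕ) : ℤ) = 0 := by
    rw [scount_eq, List.countP_eq_zero]
    intro x hx
    simp only [decide_eq_true_eq, not_le]
    have hx' : x ≤ X.sum := List.single_le_sum (fun y _ => Nat.zero_le y) x hx
    exact_mod_cast Nat.lt_succ_of_le hx'
  simp only [Set.mem_setOf_eq, h0, Nat.cast_zero]
  exact hM.le

lemma estK_mem (X : List ℕ) (M : ℝ) (hM : 0 < M) :
    (Scount X ((estK X M : ℕ) : ℤ) : ℝ) ≤ M :=
  Nat.sInf_mem (est_set_nonempty X M hM)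

theorem est_mono (M : ℝ) (hM : 0 < M) (X : List ℕ) (d' : ℕ)
    (hd' : d' ≤ X.length) :
    est (X.take d') M ≤ est X M := by
  set Y := X.take d' with hY
  set k := estK X M with hk
  set k' := estK Y M with hk'
  have hkX : (Scount X (k : ℤ) : ℝ) ≤ M := estK_mem X M hM
  have hkY : (Scount Y (k' : ℤ) : ℝ) ≤ M := estK_mem Y M hM
  have hle : k' ≤ k := by
    apply Nat.sInf_le
    have : (Scount Y (k : ℤ) : ℝ) ≤ (Scount X (k : ℤ) : ℝ) := by
      exact_mod_cast scount_take_le X d' _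
    exact this.trans hkX
  rcases Nat.eq_zero_or_pos k with hk0 | hkpos
  · -- k = 0, hence k' = 0
    have hk'0 : k' = 0 := Nat.le_zero.mp (hk0 ▸ hle)
    rw [est, est, ← hk, ← hk', hk0, hk'0]
    simp only [lt_self_iff_false, if_false]
    exact_mod_cast tcount_take_le X d' 0
  · rw [est, est, ← hk, ← hk', if_pos hkpos]
    rcases Nat.eq_zero_or_pos k' with hk'0 | hk'pos
    · rw [hk'0]
      simp only [lt_self_iff_false, if_false]
      have h1 : (Tcount Y 0 : ℝ) ≤ (Scount Y 0 : ℝ) := by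
        exact_mod_cast tcount_le_scount Y 0
      have h2 : (Scount Y 0 : ℝ) ≤ M := by
        have := hkY; rwa [hk'0] at this
      have h3 : M ≤ M * 2 ^ (k - 1) := by
        nth_rewrite 1 [← mul_one M]
        exact mul_le_mul_of_nonneg_left (one_le_pow₀ (by norm_num)) hM.le
      exact le_max_of_le_right ((h1.trans h2).trans h3)
    · rw [if_pos hk'pos]
      apply max_le
      · rcases eq_or_lt_of_le hle with heq | hlt
        · apply le_max_of_le_left
          rw [heq]
          have : (Tcount Y (k : ℤ) : ℝ) ≤ (Tcount X (k : ℤ) : ℝ) := by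
            exact_mod_cast tcount_take_le X d' _
          exact mul_le_mul_of_nonneg_right this (by positivity)
        · apply le_max_of_le_right
          have h1 : (Tcount Y (k' : ℤ) : ℝ) ≤ M :=
            le_trans (by exact_mod_cast tcount_le_scount Y _) hkY
          have h2 : (2 : ℝ) ^ k' ≤ 2 ^ (k - 1) := by
            apply pow_le_pow_right₀ (by norm_num)
            omega
          exact mul_le_mul h1 h2 (by positivity) hM.le
      · apply le_max_of_le_right
        exact mul_le_mul_of_nonneg_left
          (pow_le_pow_right₀ (by norm_num) (by omega)) hM.le
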